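/- For any S ⊆ F_2^n with s = |S|, one has Σ_{u∈F_2^n} (\widehat{1_S}(u))^4 ≥ 2^n(3s^2 − 2s), with equality if and only if S is a Sidon set. -/

import Mathlib

open Finset
def dotp {n : ℕ} (a x : Fin n → ZMod 2) : ZMod 2 := ∑ i, a i * x i
def chi {n : ℕ} (a x : Fin n → ZMod 2) : ℤ := (-1 : ℤ) ^ (dotp a x).val
def fourierS {n : ℕ} (S : Finset (Fin n → ZMod 2)) (u : Fin n → ZMod 2) : ℤ :=
  ∑ x ∈ S, chi u x
def IsSidon {n : ℕ} (S : Set (Fin n → ZMod 2)) : Prop :=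
  ∀ a ∈ S, ∀ b ∈ S, ∀ c ∈ S, ∀ d ∈ S,
    a ≠ b → c ≠ d → a + b = c + d → ({a, b} : Set (Fin n → ZMod 2)) = {c, d}
def IsKCover {n : ℕ} (S : Finset (Fin n → ZMod 2)) (k : ℕ) : Prop :=
  0 < k ∧ ∀ p ∉ S,
    {T : Finset (Fin n → ZMod 2) | T ⊆ S ∧ T.card = 3 ∧ ∑ x ∈ T, x = p}.ncard = k
def cayGamma {n : ℕ} (S : Set (Fin n → ZMod 2)) : SimpleGraph (Fin n → ZMod 2) where
  Adj u v := u + v ≠ 0 ∧ ∃ x ∈ S, (u + v) + x ∈ S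
  symm := ⟨by intro u v h; rwa [add_comm v u]⟩
  loopless := ⟨by
    intro u h
    apply h.1
    funext i
    exact CharTwo.add_self_eq_zero (u i)⟩



lemma neg_one_pow_add (s t : ZMod 2) : ((-1:ℤ))^(s+t).val = (-1:ℤ)^s.val * (-1:ℤ)^t.val := by revert s t; decide

lemma dotp_add_right {n : ℕ} (a x y : Fin n → ZMod 2) : dotp a (x+y) = dotp a x + dotp a y := by
  simp [dotp, mul_add, Finset.sum_add_distrib]

lemma dotp_add_left {n : ℕ} (a b x : Fin n → ZMod 2) : dotp (a+b) x = dotp a x + dotp b x := by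
  simp [dotp, add_mul, Finset.sum_add_distrib]

lemma chi_add {n : ℕ} (u x y : Fin n → ZMod 2) : chi u (x+y) = chi u x * chi u y := by
  rw [chi, dotp_add_right, neg_one_pow_add]; rfl

lemma chi_zero {n : ℕ} (u : Fin n → ZMod 2) : chi u 0 = 1 := by
  simp [chi, dotp]

lemma dotp_single {n : ℕ} (i : Fin n) (x : Fin n → ZMod 2) :
    dotp (Pi.single i 1) x = x i := by
  rw [dotp, Finset.sum_eq_single i]
  · simp
  · intro j _ hj; simp [Pi.single_apply, hj]
  · simp

lemma orth {n : ℕ} (x : Fin n → ZMod 2) :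
    ∑ u : Fin n → ZMod 2, chi u x = if x = 0 then (2:ℤ)^n else 0 := by
  split_ifs with h
  · subst h
    simp [chi_zero, Finset.card_univ]
  · obtain ⟨i, hi⟩ : ∃ i, x i ≠ 0 := by
      by_contra hc; push_neg at hc; exact h (funext hc)
    have hxi : x i = 1 := by
      have : ∀ z : ZMod 2, z ≠ 0 → z = 1 := by decide
      exact this _ hi
    refine Finset.sum_involution (fun u _ => u + Pi.single i 1) ?_ ?_ (fun u hu => Finset.mem_univ _) ?_
    · intro u _
      have : chi (u + Pi.single i 1) x = - chi u x := by
        rw [chi, dotp_add_left, dotp_single, hxi]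
        rw [neg_one_pow_add]
        have : ((-1:ℤ))^(1:ZMod 2).val = -1 := by decide
        rw [this, chi]; ring
      rw [this]; ring
    · intro u _ _
      intro hc
      have hci := congrFun hc i
      simp [Pi.single_apply] at hci
    · intro u _
      funext j
      have h2 : ∀ z : ZMod 2, z + 1 + 1 = z := by decide
      by_cases hj : j = i
      · subst hj; simpa [Pi.single_apply] using h2 (u j)
      · simp [Pi.single_apply, hj]


lemma chi4 {n : ℕ} (u a b c d : Fin n → ZMod 2) :
    chi u (a+b+c+d) = chi u a * chi u b * chi u c * chi u d := by
  rw [chi_add, chi_add, chi_add]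

lemma expand {n : ℕ} (S : Finset (Fin n → ZMod 2)) (u : Fin n → ZMod 2) :
    fourierS S u ^ 4 = ∑ a ∈ S, ∑ b ∈ S, ∑ c ∈ S, ∑ d ∈ S, chi u (a+b+c+d) := by
  have : fourierS S u ^ 4 = ((fourierS S u * fourierS S u) * fourierS S u) * fourierS S u := by ring
  rw [this]
  unfold fourierS
  simp only [Finset.sum_mul, Finset.mul_sum]
  refine Finset.sum_congr rfl fun a _ => ?_
  refine Finset.sum_congr rfl fun b _ => ?_
  refine Finset.sum_congr rfl fun c _ => ?_
  refine Finset.sum_congr rfl fun d _ => ?_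
  rw [chi4]; ring

lemma total {n : ℕ} (S : Finset (Fin n → ZMod 2)) :
    ∑ u : Fin n → ZMod 2, fourierS S u ^ 4
      = ∑ a ∈ S, ∑ b ∈ S, ∑ c ∈ S, ∑ d ∈ S,
          (if a+b+c+d = 0 then (2:ℤ)^n else 0) := by
  simp only [expand]
  rw [Finset.sum_comm]
  refine Finset.sum_congr rfl fun a _ => ?_
  rw [Finset.sum_comm]
  refine Finset.sum_congr rfl fun b _ => ?_
  rw [Finset.sum_comm]
  refine Finset.sum_congr rfl fun c _ => ?_
  rw [Finset.sum_comm]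
  refine Finset.sum_congr rfl fun d _ => ?_
  exact orth _


lemma addself {n : ℕ} (x : Fin n → ZMod 2) : x + x = 0 :=
  funext fun i => CharTwo.add_self_eq_zero (x i)

lemma add_eq_zero_iff_eq2 {n : ℕ} (x y : Fin n → ZMod 2) : x + y = 0 ↔ x = y := by
  constructor
  · intro h
    have h2 : x + y + y = 0 + y := by rw [h]
    simpa [add_assoc, addself y] using h2
  · rintro rfl; exact addself x

section Counting
variable {n : ℕ} (S : Finset (Fin n → ZMod 2))

def Quad : Finset ((Fin n → ZMod 2) × (Fin n → ZMod 2) × (Fin n → ZMod 2) × (Fin n → ZMod 2)) :=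
  (S ×ˢ (S ×ˢ (S ×ˢ S))).filter (fun p => p.1 + p.2.1 + p.2.2.1 + p.2.2.2 = 0)

lemma mem_Quad {p : (Fin n → ZMod 2) × (Fin n → ZMod 2) × (Fin n → ZMod 2) × (Fin n → ZMod 2)} :
    p ∈ Quad S ↔ p.1 ∈ S ∧ p.2.1 ∈ S ∧ p.2.2.1 ∈ S ∧ p.2.2.2 ∈ S
      ∧ p.1 + p.2.1 + p.2.2.1 + p.2.2.2 = 0 := by
  simp [Quad, Finset.mem_filter, Finset.mem_product, and_assoc]

lemma total2 : ∑ u : Fin n → ZMod 2, fourierS S u ^ 4 = (2:ℤ)^n * (Quad S).card := by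
  rw [total]
  have h : ∑ a ∈ S, ∑ b ∈ S, ∑ c ∈ S, ∑ d ∈ S, (if a+b+c+d = 0 then (2:ℤ)^n else 0)
      = ∑ p ∈ S ×ˢ (S ×ˢ (S ×ˢ S)),
          (if p.1 + p.2.1 + p.2.2.1 + p.2.2.2 = 0 then (2:ℤ)^n else 0) := by
    simp only [Finset.sum_product]
  rw [h, ← Finset.sum_filter]
  rw [Finset.sum_const, nsmul_eq_mul, Quad]
  ring

def A1 := (S ×ˢ S).image (fun q : (Fin n → ZMod 2) × (Fin n → ZMod 2) => (q.1, q.1, q.2, q.2))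
def A2 := (S ×ˢ S).image (fun q : (Fin n → ZMod 2) × (Fin n → ZMod 2) => (q.1, q.2, q.1, q.2))
def A3 := (S ×ˢ S).image (fun q : (Fin n → ZMod 2) × (Fin n → ZMod 2) => (q.1, q.2, q.2, q.1))
def Diag := S.image (fun a => (a, a, a, a))

lemma mem_A1 {p : (Fin n → ZMod 2) × (Fin n → ZMod 2) × (Fin n → ZMod 2) × (Fin n → ZMod 2)} :
    p ∈ A1 S ↔ p.1 ∈ S ∧ p.2.2.1 ∈ S ∧ p.1 = p.2.1 ∧ p.2.2.1 = p.2.2.2 := by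
  obtain ⟨a, b, c, d⟩ := p
  simp only [A1, Finset.mem_image, Finset.mem_product, Prod.mk.injEq]
  constructor
  · rintro ⟨⟨x, y⟩, ⟨hx, hy⟩, rfl, rfl, rfl, rfl⟩; exact ⟨hx, hy, rfl, rfl⟩
  · rintro ⟨h1, h2, rfl, rfl⟩; exact ⟨(a, c), ⟨h1, h2⟩, rfl, rfl, rfl, rfl⟩

lemma mem_A2 {p : (Fin n → ZMod 2) × (Fin n → ZMod 2) × (Fin n → ZMod 2) × (Fin n → ZMod 2)} :
    p ∈ A2 S ↔ p.1 ∈ S ∧ p.2.1 ∈ S ∧ p.1 = p.2.2.1 ∧ p.2.1 = p.2.2.2 := by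
  obtain ⟨a, b, c, d⟩ := p
  simp only [A2, Finset.mem_image, Finset.mem_product, Prod.mk.injEq]
  constructor
  · rintro ⟨⟨x, y⟩, ⟨hx, hy⟩, rfl, rfl, rfl, rfl⟩; exact ⟨hx, hy, rfl, rfl⟩
  · rintro ⟨h1, h2, rfl, rfl⟩; exact ⟨(a, b), ⟨h1, h2⟩, rfl, rfl, rfl, rfl⟩

lemma mem_A3 {p : (Fin n → ZMod 2) × (Fin n → ZMod 2) × (Fin n → ZMod 2) × (Fin n → ZMod 2)} :
    p ∈ A3 S ↔ p.1 ∈ S ∧ p.2.1 ∈ S ∧ p.2.1 = p.2.2.1 ∧ p.1 = p.2.2.2 := by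
  obtain ⟨a, b, c, d⟩ := p
  simp only [A3, Finset.mem_image, Finset.mem_product, Prod.mk.injEq]
  constructor
  · rintro ⟨⟨x, y⟩, ⟨hx, hy⟩, rfl, rfl, rfl, rfl⟩; exact ⟨hx, hy, rfl, rfl⟩
  · rintro ⟨h1, h2, rfl, rfl⟩; exact ⟨(a, b), ⟨h1, h2⟩, rfl, rfl, rfl, rfl⟩

lemma mem_Diag {p : (Fin n → ZMod 2) × (Fin n → ZMod 2) × (Fin n → ZMod 2) × (Fin n → ZMod 2)} :
    p ∈ Diag S ↔ p.1 ∈ S ∧ p.1 = p.2.1 ∧ p.1 = p.2.2.1 ∧ p.1 = p.2.2.2 := by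
  obtain ⟨a, b, c, d⟩ := p
  simp only [Diag, Finset.mem_image, Prod.mk.injEq]
  constructor
  · rintro ⟨x, hx, rfl, rfl, rfl, rfl⟩; exact ⟨hx, rfl, rfl, rfl⟩
  · rintro ⟨h1, rfl, rfl, rfl⟩; exact ⟨a, h1, rfl, rfl, rfl, rfl⟩

lemma card_A1 : (A1 S).card = S.card ^ 2 := by
  rw [A1, Finset.card_image_of_injective, Finset.card_product]; · ring
  rintro ⟨a, c⟩ ⟨a', c'⟩ h
  simp only [Prod.mk.injEq] at h
  exact Prod.ext h.1 h.2.2.1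

lemma card_A2 : (A2 S).card = S.card ^ 2 := by
  rw [A2, Finset.card_image_of_injective, Finset.card_product]; · ring
  rintro ⟨a, b⟩ ⟨a', b'⟩ h
  simp only [Prod.mk.injEq] at h
  exact Prod.ext h.1 h.2.1

lemma card_A3 : (A3 S).card = S.card ^ 2 := by
  rw [A3, Finset.card_image_of_injective, Finset.card_product]; · ring
  rintro ⟨a, b⟩ ⟨a', b'⟩ h
  simp only [Prod.mk.injEq] at h
  exact Prod.ext h.1 h.2.1

lemma card_Diag : (Diag S).card = S.card := by
  rw [Diag, Finset.card_image_of_injective]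
  intro a a' h
  simpa using (Prod.mk.injEq _ _ _ _ ▸ h :)

lemma inter12 : A1 S ∩ A2 S = Diag S := by
  ext p
  simp only [Finset.mem_inter, mem_A1, mem_A2, mem_Diag]
  constructor
  · rintro ⟨⟨h1, _, e1, e2⟩, ⟨_, _, e3, e4⟩⟩
    exact ⟨h1, e1, e3, by rw [e1, e4]⟩
  · rintro ⟨h1, e1, e2, e3⟩
    exact ⟨⟨h1, e2 ▸ h1, e1, by rw [← e2, e3]⟩, ⟨h1, e1 ▸ h1, e2, by rw [← e1, e3]⟩⟩

lemma inter13 : A1 S ∩ A3 S = Diag S := by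
  ext p
  simp only [Finset.mem_inter, mem_A1, mem_A3, mem_Diag]
  constructor
  · rintro ⟨⟨h1, _, e1, e2⟩, ⟨_, _, e3, e4⟩⟩
    exact ⟨h1, e1, by rw [e1, e3], e4⟩
  · rintro ⟨h1, e1, e2, e3⟩
    exact ⟨⟨h1, e2 ▸ h1, e1, by rw [← e2, e3]⟩, ⟨h1, e1 ▸ h1, by rw [← e1, e2], e3⟩⟩

lemma inter23 : A2 S ∩ A3 S = Diag S := by
  ext p
  simp only [Finset.mem_inter, mem_A2, mem_A3, mem_Diag]
  constructor
  · rintro ⟨⟨h1, h2, e1, e2⟩, ⟨_, _, e3, e4⟩⟩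
    have hab : p.1 = p.2.1 := by rw [e1, ← e3]
    exact ⟨h1, hab, by rw [hab, e3], e4⟩
  · rintro ⟨h1, e1, e2, e3⟩
    exact ⟨⟨h1, e1 ▸ h1, e2, by rw [← e1, e3]⟩, ⟨h1, e1 ▸ h1, by rw [← e1, e2], e3⟩⟩

end Counting


lemma sum4a {n : ℕ} (x y : Fin n → ZMod 2) : x + y + x + y = 0 := by
  have h : x + y + x + y = (x + y) + (x + y) := by abel
  rw [h, addself]

lemma sum4b {n : ℕ} (x y : Fin n → ZMod 2) : x + y + y + x = 0 := by
  have h : x + y + y + x = (x + y) + (x + y) := by abel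
  rw [h, addself]

lemma sum4c {n : ℕ} (x y : Fin n → ZMod 2) : x + x + y + y = 0 := by
  rw [addself, zero_add, addself]

section Main
variable {n : ℕ} (S : Finset (Fin n → ZMod 2))

lemma U_subset : A1 S ∪ (A2 S ∪ A3 S) ⊆ Quad S := by
  intro p hp
  rw [Finset.mem_union, Finset.mem_union] at hp
  rw [mem_Quad]
  rcases hp with h | h | h
  · rw [mem_A1] at h
    obtain ⟨h1, h2, e1, e2⟩ := h
    exact ⟨h1, e1 ▸ h1, h2, e2 ▸ h2, by rw [← e1, ← e2, sum4c]⟩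
  · rw [mem_A2] at h
    obtain ⟨h1, h2, e1, e2⟩ := h
    exact ⟨h1, h2, e1 ▸ h1, e2 ▸ h2, by rw [← e1, ← e2, sum4a]⟩
  · rw [mem_A3] at h
    obtain ⟨h1, h2, e1, e2⟩ := h
    exact ⟨h1, h2, e1 ▸ h2, e2 ▸ h1, by rw [← e1, ← e2, sum4b]⟩

lemma card_U : ((A1 S ∪ (A2 S ∪ A3 S)).card : ℤ)
    = 3 * (S.card : ℤ) ^ 2 - 2 * (S.card : ℤ) := by
  have h23 := Finset.card_union_add_card_inter (A2 S) (A3 S)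
  rw [inter23, card_A2, card_A3, card_Diag] at h23
  have hI : A1 S ∩ (A2 S ∪ A3 S) = Diag S := by
    rw [Finset.inter_union_distrib_left, inter12, inter13, Finset.union_self]
  have hU := Finset.card_union_add_card_inter (A1 S) (A2 S ∪ A3 S)
  rw [hI, card_A1, card_Diag] at hU
  have h23' : ((A2 S ∪ A3 S).card : ℤ) + (S.card : ℤ)
      = (S.card : ℤ)^2 + (S.card : ℤ)^2 := by exact_mod_cast congrArg (Nat.cast : ℕ → ℤ) h23
  have hU' : ((A1 S ∪ (A2 S ∪ A3 S)).card : ℤ) + (S.card : ℤ)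
      = (S.card : ℤ)^2 + ((A2 S ∪ A3 S).card : ℤ) := by
    exact_mod_cast congrArg (Nat.cast : ℕ → ℤ) hU
  linarith

lemma quad_sub_iff : Quad S ⊆ A1 S ∪ (A2 S ∪ A3 S) ↔ IsSidon (S : Set (Fin n → ZMod 2)) := by
  constructor
  · intro hsub a ha b hb c hc d hd hab hcd habcd
    have hmem : (a, b, c, d) ∈ Quad S := by
      rw [mem_Quad]
      refine ⟨ha, hb, hc, hd, ?_⟩
      show a + b + c + d = 0
      rw [habcd]; exact sum4a c d
    have := hsub hmem
    rw [Finset.mem_union, Finset.mem_union, mem_A1, mem_A2, mem_A3] at this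
    rcases this with h | h | h
    · exact absurd h.2.2.1 hab
    · obtain ⟨_, _, e1, e2⟩ := h
      rw [show a = c from e1, show b = d from e2]
    · obtain ⟨_, _, e1, e2⟩ := h
      rw [show a = d from e2, show b = c from e1]
      exact Set.pair_comm d c
  · intro hS p hp
    obtain ⟨a, b, c, d⟩ := p
    rw [mem_Quad] at hp
    obtain ⟨ha, hb, hc, hd, hsum⟩ := hp
    simp only at ha hb hc hd hsum
    rw [Finset.mem_union, Finset.mem_union, mem_A1, mem_A2, mem_A3]
    have habcd : a + b = c + d := by
      have h2 : a + b + (c + d) = 0 := by rw [← hsum]; abel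
      exact (add_eq_zero_iff_eq2 _ _).mp h2
    by_cases hab : a = b
    · left
      refine ⟨ha, hc, hab, ?_⟩
      subst hab
      have : c + d = 0 := by rw [← habcd, addself]
      exact (add_eq_zero_iff_eq2 _ _).mp this
    · have hcd : c ≠ d := by
        intro h; subst h
        rw [addself] at habcd
        exact hab ((add_eq_zero_iff_eq2 _ _).mp habcd)
      have hpair := hS a ha b hb c hc d hd hab hcd habcd
      have hac : a = c ∨ a = d := by
        have : a ∈ ({c, d} : Set _) := hpair ▸ Set.mem_insert a {b}
        simpa using this
      rcases hac with h | h
      · right; left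
        refine ⟨ha, hb, h, ?_⟩
        subst h
        exact add_left_cancel habcd
      · right; right
        refine ⟨ha, hb, ?_, h⟩
        subst h
        have : b + a = c + a := by rw [← habcd]; abel
        have hbc := add_right_cancel this
        exact hbc
  
lemma main4 : (2 ^ n * (3 * (S.card : ℤ) ^ 2 - 2 * (S.card : ℤ))
        ≤ ∑ u : Fin n → ZMod 2, (fourierS S u) ^ 4)
      ∧ ((∑ u : Fin n → ZMod 2, (fourierS S u) ^ 4
            = 2 ^ n * (3 * (S.card : ℤ) ^ 2 - 2 * (S.card : ℤ)))
          ↔ IsSidon (S : Set (Fin n → ZMod 2))) := by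
  set U := A1 S ∪ (A2 S ∪ A3 S) with hUdef
  have hsub := U_subset S
  have hcard : ((Quad S).card : ℤ) = ((Quad S \ U).card : ℤ) + U.card := by
    have := Finset.card_sdiff_add_card_eq_card hsub
    exact_mod_cast (congrArg (Nat.cast : ℕ → ℤ) this).symm
  have htot : ∑ u : Fin n → ZMod 2, (fourierS S u) ^ 4
      = 2 ^ n * (3 * (S.card : ℤ) ^ 2 - 2 * (S.card : ℤ)) + 2 ^ n * ((Quad S \ U).card : ℤ) := by
    rw [total2, hcard, card_U]
    ring
  have hpow : (0:ℤ) < 2 ^ n := by positivity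
  constructor
  · rw [htot]
    have : (0:ℤ) ≤ 2 ^ n * ((Quad S \ U).card : ℤ) := by positivity
    linarith
  · rw [htot, ← quad_sub_iff]
    constructor
    · intro h
      have hE : ((Quad S \ U).card : ℤ) = 0 := by
        have := mul_eq_zero.mp (by linarith : (2:ℤ) ^ n * ((Quad S \ U).card : ℤ) = 0)
        rcases this with h' | h'
        · exact absurd h' (ne_of_gt hpow)
        · exact h'
      have : Quad S \ U = ∅ := Finset.card_eq_zero.mp (by exact_mod_cast hE)
      exact Finset.sdiff_eq_empty_iff_subset.mp this
    · intro h
      have : Quad S \ U = ∅ := Finset.sdiff_eq_empty_iff_subset.mpr h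
      rw [this]
      simp

end Main

theorem stmt4 {n : ℕ} (S : Finset (Fin n → ZMod 2)) :
    (2 ^ n * (3 * (S.card : ℤ) ^ 2 - 2 * (S.card : ℤ))
        ≤ ∑ u : Fin n → ZMod 2, (fourierS S u) ^ 4)
      ∧ ((∑ u : Fin n → ZMod 2, (fourierS S u) ^ 4
            = 2 ^ n * (3 * (S.card : ℤ) ^ 2 - 2 * (S.card : ℤ)))
          ↔ IsSidon (S : Set (Fin n → ZMod 2))) := by
  exact main4 S
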